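/- Gini's gamma of the bound copula with parameter θ ∈ [-1,1] equals θ(θ²+1)/2, i.e., 4·∫₀¹ [C(u,u) + C(u,1-u) - u] du = θ(θ²+1)/2 where C(u,v) = (1-θ²)uv + (θ/4)[(1+θ)² min(u,v) - (1-θ)² max(u+v-1,0)]. -/

import Mathlib

/-- The bound copula. -/
noncomputable def boundCopula (θ u v : ℝ) : ℝ :=
  (1 - θ^2) * u * v +
    (θ / 4) * ((1 + θ)^2 * min u v - (1 - θ)^2 * max (u + v - 1) 0)

lemma polyInt (a b c x y : ℝ) :
    ∫ u in x..y, (a*u^2 + b*u + c) = a*(y^3-x^3)/3 + b*(y^2-x^2)/2 + c*(y-x) := by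
  have h : ∀ u ∈ Set.uIcc x y,
      HasDerivAt (fun u : ℝ => a*u^3/3 + b*u^2/2 + c*u) (a*u^2 + b*u + c) u := by
    intro u _
    have h1 := ((((hasDerivAt_pow 3 u).const_mul a).div_const 3).add
        (((hasDerivAt_pow 2 u).const_mul b).div_const 2)).add ((hasDerivAt_id u).const_mul c)
    refine h1.congr_deriv ?_
    push_cast
    ring
  rw [intervalIntegral.integral_eq_sub_of_hasDerivAt h
    ((Continuous.intervalIntegrable (by continuity) x y))]
  ring

theorem boundCopula_gini_gamma (θ : ℝ) (hθ : θ ∈ Set.Icc (-1:ℝ) 1) :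
    4 * (∫ u in (0:ℝ)..1, (boundCopula θ u u + boundCopula θ u (1 - u) - u))
      = θ * (θ^2 + 1) / 2 := by
  have hf : Continuous (fun u : ℝ => boundCopula θ u u + boundCopula θ u (1 - u) - u) := by
    unfold boundCopula; fun_prop
  have hsplit := intervalIntegral.integral_add_adjacent_intervals
    (hf.intervalIntegrable (μ := MeasureTheory.volume) 0 (1/2)) (hf.intervalIntegrable (1/2) 1)
  rw [← hsplit]
  have h1 : (∫ u in (0:ℝ)..(1/2), (boundCopula θ u u + boundCopula θ u (1-u) - u))
      = ∫ u in (0:ℝ)..(1/2), ((0:ℝ)*u^2 + ((1-θ^2) + (θ/2)*(1+θ)^2 - 1)*u + 0) := by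
    apply intervalIntegral.integral_congr
    intro u hu
    rw [Set.uIcc_of_le (by norm_num)] at hu
    obtain ⟨hu0, hu2⟩ := hu
    simp only [boundCopula]
    rw [min_self, min_eq_left (by linarith),
      max_eq_right (show u + u - 1 ≤ (0:ℝ) by linarith),
      max_eq_right (show u + (1-u) - 1 ≤ (0:ℝ) by linarith)]
    ring
  have h2 : (∫ u in (1/2:ℝ)..1, (boundCopula θ u u + boundCopula θ u (1-u) - u))
      = ∫ u in (1/2:ℝ)..1, ((0:ℝ)*u^2 + (-θ^2 - (θ/2)*(1-θ)^2)*u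
          + ((θ/4)*(1+θ)^2 + (θ/4)*(1-θ)^2)) := by
    apply intervalIntegral.integral_congr
    intro u hu
    rw [Set.uIcc_of_le (by norm_num)] at hu
    obtain ⟨hu0, hu2⟩ := hu
    simp only [boundCopula]
    rw [min_self, min_eq_right (by linarith),
      max_eq_left (show (0:ℝ) ≤ u + u - 1 by linarith),
      max_eq_right (show u + (1-u) - 1 ≤ (0:ℝ) by linarith)]
    ring
  rw [h1, h2, polyInt, polyInt]
  ring
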